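/- Let G be a graph (simple, connected, locally finite, with edges of arbitrary lengths) and let x, y, u, v ∈ G. Set Γ := [xu] ∪ [uv] ∪ [vy], a union of three geodesics. If L([xu]) ≤ l_max and L([vy]) ≤ l_max, where l_max := sup_{e ∈ E(G)} L(e), then for every α ∈ Γ there exists β on a geodesic [xy] with d_G(α, β) ≤ 2 δ(G) + l_max. -/

import Mathlib

open Metric
open scoped ENNReal

noncomputable section

/-- A geodesic arc from `x` to `y` in a metric space `X`: the image of an isometric
embedding of the interval `[0, dist x y]` sending `0` to `x` and `dist x y` to `y`. -/
def IsGeodesicArc {X : Type} [MetricSpace X] (x y : X) (s : Set X) : Prop :=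
  ∃ γ : ℝ → X, γ 0 = x ∧ γ (dist x y) = y ∧
    (∀ a ∈ Set.Icc (0 : ℝ) (dist x y), ∀ b ∈ Set.Icc (0 : ℝ) (dist x y),
      dist (γ a) (γ b) = |a - b|) ∧
    s = γ '' Set.Icc (0 : ℝ) (dist x y)

/-- A geodesic triangle with vertices `x, y, z` and sides `s₁ = [xy]`, `s₂ = [yz]`,
`s₃ = [zx]`. -/
def IsGeodTriangle {X : Type} [MetricSpace X] (x y z : X) (s₁ s₂ s₃ : Set X) : Prop :=
  IsGeodesicArc x y s₁ ∧ IsGeodesicArc y z s₂ ∧ IsGeodesicArc z x s₃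

/-- The sharp constant for thinness of the side `s` with respect to the set `t`
(the union of the other sides): the supremum over points of `s` of the distance to `t`. -/
def sideThin {X : Type} [MetricSpace X] (s t : Set X) : ℝ≥0∞ :=
  ⨆ p ∈ s, ENNReal.ofReal (infDist p t)

/-- The sharp thin constant `δ(T)` of a triangle (or trilateral) with sides
`s₁ s₂ s₃`: a triangle is `δ`-thin iff `triThin s₁ s₂ s₃ ≤ δ`. -/
def triThin {X : Type} [MetricSpace X] (s₁ s₂ s₃ : Set X) : ℝ≥0∞ :=
  max (sideThin s₁ (s₂ ∪ s₃)) (max (sideThin s₂ (s₃ ∪ s₁)) (sideThin s₃ (s₁ ∪ s₂)))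

/-- The hyperbolicity constant `δ(X)` of a metric space:
`δ(X) = sup { δ(T) : T is a geodesic triangle in X }` (with value in `[0,∞]`). -/
def hypConst (X : Type) [MetricSpace X] : ℝ≥0∞ :=
  ⨆ (x : X) (y : X) (z : X) (s₁ : Set X) (s₂ : Set X) (s₃ : Set X)
    (_ : IsGeodTriangle x y z s₁ s₂ s₃), triThin s₁ s₂ s₃

/-- A simple closed curve in a metric space: an injective continuous image of a circle. -/
def IsSimpleClosedCurve {X : Type} [MetricSpace X] (s : Set X) : Prop :=
  ∃ f : AddCircle (1 : ℝ) → X, Continuous f ∧ Function.Injective f ∧ Set.range f = s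

/-- A simple, connected, locally finite graph with edges of arbitrary (positive) lengths,
regarded as a geodesic metric space `X`: each edge `[u,v]` of length `ℓ s(u,v)` is
identified with the real interval `[0, ℓ s(u,v)]` via the parametrization `param u v`,
and the distance is the shortest-path distance. -/
structure MetricGraph where
  /-- the vertices -/
  V : Type
  /-- the (simple) graph structure -/
  G : SimpleGraph V
  conn : G.Connected
  locFin : ∀ v : V, (G.neighborSet v).Finite
  /-- the length of each edge -/
  ℓ : Sym2 V → ℝ
  ℓ_pos : ∀ e ∈ G.edgeSet, 0 < ℓ e
  /-- the set of points of the graph, as a metric space -/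
  X : Type
  [mX : MetricSpace X]
  /-- the inclusion of the vertices among the points -/
  ι : V → X
  ι_inj : Function.Injective ι
  /-- the arclength parametrization of each edge by `[0, ℓ s(u,v)]` -/
  param : ∀ u v : V, G.Adj u v → ℝ → X
  param_zero : ∀ (u v : V) (h : G.Adj u v), param u v h 0 = ι u
  param_symm : ∀ (u v : V) (h : G.Adj u v) (t : ℝ),
    param v u h.symm t = param u v h (ℓ s(u, v) - t)
  param_injOn : ∀ (u v : V) (h : G.Adj u v),
    Set.InjOn (param u v h) (Set.Icc 0 (ℓ s(u, v)))
  /-- every point of the graph lies on some edge -/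
  cover : ∀ x : X, ∃ (u v : V) (h : G.Adj u v),
    ∃ t ∈ Set.Icc (0 : ℝ) (ℓ s(u, v)), x = param u v h t
  /-- the distance between vertices is the shortest-path distance -/
  dist_vertex : ∀ u v : V,
    dist (ι u) (ι v) = sInf { L : ℝ | ∃ w : G.Walk u v, L = (w.edges.map ℓ).sum }
  /-- the distance from an interior point of an edge to any other point is realized
  either within the edge or through one of the two endpoints of the edge -/
  dist_eq : ∀ (u v : V) (h : G.Adj u v), ∀ t ∈ Set.Icc (0 : ℝ) (ℓ s(u, v)), ∀ y : X,
    dist (param u v h t) y =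
      sInf ({ t + dist (ι u) y, (ℓ s(u, v) - t) + dist (ι v) y } ∪
            { d : ℝ | ∃ r ∈ Set.Icc (0 : ℝ) (ℓ s(u, v)), y = param u v h r ∧ d = |t - r| })
  /-- the space of points is a geodesic metric space -/
  geodesic : ∀ x y : X, ∃ s : Set X, IsGeodesicArc x y s

attribute [instance] MetricGraph.mX

namespace MetricGraph

variable (M : MetricGraph)

/-- The set of points of an edge of the graph. -/
def edgePoints {u v : M.V} (h : M.G.Adj u v) : Set M.X :=
  M.param u v h '' Set.Icc 0 (M.ℓ s(u, v))

/-- The midpoint `Pm(e)` of an edge. -/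
def midpt {u v : M.V} (h : M.G.Adj u v) : M.X :=
  M.param u v h (M.ℓ s(u, v) / 2)

/-- `PMV(G)`: the set of points which are vertices or midpoints of edges. -/
def PMV : Set M.X :=
  Set.range M.ι ∪ { x | ∃ (u v : M.V) (h : M.G.Adj u v), x = M.midpt h }

/-- `l_max = sup_{e ∈ E(G)} L(e)` (with value in `[0,∞]`). -/
def lmax : ℝ≥0∞ :=
  ⨆ e : M.G.edgeSet, ENNReal.ofReal (M.ℓ e.1)

/-- A cycle graph: a (finite) connected graph in which every vertex has degree 2.
(Connectedness is part of the `MetricGraph` structure.) -/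
def IsCycleGraph : Prop :=
  Finite M.V ∧ ∀ v : M.V, (M.G.neighborSet v).ncard = 2

end MetricGraph

/-- The line graph `L(G)` of a metric graph `G`: its vertices correspond to the edges
of `G`, two of them being adjacent when the corresponding edges of `G` share a vertex;
the edge `[V_{e_i}, V_{e_j}]` of `L(G)` has length `(L(e_i) + L(e_j))/2`. -/
structure LineGraphOf (M : MetricGraph) where
  /-- the line graph, as a metric graph -/
  L : MetricGraph
  /-- the vertices of `L(G)` correspond to the edges of `G` -/
  vEquiv : L.V ≃ M.G.edgeSet
  adj_iff : ∀ a b : L.V, L.G.Adj a b ↔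
    (a ≠ b ∧ ∃ v : M.V, v ∈ (vEquiv a : Sym2 M.V) ∧ v ∈ (vEquiv b : Sym2 M.V))
  len_eq : ∀ a b : L.V, L.G.Adj a b →
    L.ℓ s(a, b) = (M.ℓ (vEquiv a : Sym2 M.V) + M.ℓ (vEquiv b : Sym2 M.V)) / 2

/-- The set `PM_LV(L(G))`: points of `L(G)` which are vertices or points
`Pm_L([V_{e_i},V_{e_j}])`, i.e. the point of the edge `[V_{e_i},V_{e_j}]` at distance
`L(e_i)/2` from `V_{e_i}`. -/
def lineGraphPMLV (M : MetricGraph) (LG : LineGraphOf M) : Set LG.L.X :=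
  Set.range LG.L.ι ∪
    { x | ∃ (a b : LG.L.V) (hab : LG.L.G.Adj a b),
        x = LG.L.param a b hab (M.ℓ (LG.vEquiv a : Sym2 M.V) / 2) }

/-- The canonical map `h : L(G) → G`.  It sends the vertex `V_e` to the midpoint `Pm(e)`
of `e`, the point `Pm_L([V_{e_i},V_{e_j}])` to the common vertex `e_i ∩ e_j`, and maps
each half-edge of `L(G)` isometrically onto the corresponding half-edge of `G`:
if `e_a = s(u,w)` and `w` is the common vertex of `e_a` and `e_b`, then the point of the
edge `[V_{e_a},V_{e_b}]` at distance `t ∈ [0, L(e_a)/2]` from `V_{e_a}` is sent to the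
point of `e_a` at distance `L(e_a)/2 + t` from `u`. -/
structure CanonicalMap (M : MetricGraph) (LG : LineGraphOf M) where
  /-- the underlying map on points -/
  h : LG.L.X → M.X
  h_halfEdge : ∀ (a b : LG.L.V) (hab : LG.L.G.Adj a b) (u w : M.V) (huw : M.G.Adj u w),
    (LG.vEquiv a : Sym2 M.V) = s(u, w) → w ∈ (LG.vEquiv b : Sym2 M.V) →
    ∀ t ∈ Set.Icc (0 : ℝ) (M.ℓ (LG.vEquiv a : Sym2 M.V) / 2),
      h (LG.L.param a b hab t) =
        M.param u w huw (M.ℓ (LG.vEquiv a : Sym2 M.V) / 2 + t)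

end

section Aux

variable {X : Type} [MetricSpace X]

lemma IsGeodesicArc.mem_left {x y : X} {s : Set X} (h : IsGeodesicArc x y s) : x ∈ s := by
  obtain ⟨γ, h0, hd, hiso, hs⟩ := h
  rw [hs]
  exact ⟨0, ⟨le_refl 0, dist_nonneg⟩, h0⟩

lemma IsGeodesicArc.symm {x y : X} {s : Set X} (h : IsGeodesicArc x y s) :
    IsGeodesicArc y x s := by
  obtain ⟨γ, h0, hd, hiso, hs⟩ := h
  refine ⟨fun t => γ (dist x y - t), by simp [hd], by rw [dist_comm y x]; simp [h0], ?_, ?_⟩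
  · intro a ha b hb
    rw [dist_comm y x] at ha hb
    show dist (γ (dist x y - a)) (γ (dist x y - b)) = |a - b|
    rw [hiso _ ⟨by linarith [ha.2], by linarith [ha.1]⟩ _ ⟨by linarith [hb.2], by linarith [hb.1]⟩]
    rw [show dist x y - a - (dist x y - b) = -(a - b) by ring, abs_neg]
  · rw [hs, dist_comm y x]
    ext p
    constructor
    · rintro ⟨t, ht, rfl⟩
      exact ⟨dist x y - t, ⟨by linarith [ht.2], by linarith [ht.1]⟩, by simp⟩
    · rintro ⟨t, ht, rfl⟩
      exact ⟨dist x y - t, ⟨by linarith [ht.2], by linarith [ht.1]⟩, rfl⟩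

lemma IsGeodesicArc.isCompact {x y : X} {s : Set X} (h : IsGeodesicArc x y s) :
    IsCompact s := by
  obtain ⟨γ, h0, hd, hiso, hs⟩ := h
  rw [hs]
  apply isCompact_Icc.image_of_continuousOn
  apply LipschitzOnWith.continuousOn (K := 1)
  rw [lipschitzOnWith_iff_dist_le_mul]
  intro a ha b hb
  rw [hiso a ha b hb, Real.dist_eq]
  simp

lemma IsGeodesicArc.dist_left_le {x y : X} {s : Set X} (h : IsGeodesicArc x y s)
    {p : X} (hp : p ∈ s) : dist x p ≤ dist x y := by
  obtain ⟨γ, h0, hd, hiso, hs⟩ := h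
  rw [hs] at hp
  obtain ⟨t, ht, rfl⟩ := hp
  have h' : dist x (γ t) = t := by
    rw [← h0, hiso 0 ⟨le_refl 0, dist_nonneg⟩ t ht, zero_sub, abs_neg, abs_of_nonneg ht.1]
  rw [h']
  exact ht.2

lemma triThin_le_hypConst {x y z : X} {s₁ s₂ s₃ : Set X}
    (ht : IsGeodTriangle x y z s₁ s₂ s₃) : triThin s₁ s₂ s₃ ≤ hypConst X := by
  refine le_iSup_of_le x (le_iSup_of_le y (le_iSup_of_le z (le_iSup_of_le s₁
    (le_iSup_of_le s₂ (le_iSup_of_le s₃ ?_)))))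
  exact le_iSup (fun _ : IsGeodTriangle x y z s₁ s₂ s₃ => triThin s₁ s₂ s₃) ht

lemma side1_le_hypConst {x y z : X} {s₁ s₂ s₃ : Set X}
    (ht : IsGeodTriangle x y z s₁ s₂ s₃) {p : X} (hp : p ∈ s₁) :
    ENNReal.ofReal (Metric.infDist p (s₂ ∪ s₃)) ≤ hypConst X := by
  refine le_trans ?_ (triThin_le_hypConst ht)
  refine le_trans ?_ (le_max_left _ _)
  exact le_iSup₂ (f := fun q (_ : q ∈ s₁) => ENNReal.ofReal (Metric.infDist q (s₂ ∪ s₃))) p hp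

end Aux

/-- Let `x, y, u, v ∈ G` and `Γ := [xu] ∪ [uv] ∪ [vy]` be a union of three
geodesics.  If `L([xu]) ≤ l_max` and `L([vy]) ≤ l_max`, then for every `α ∈ Γ` there
exists `β` on the geodesic `[xy]` with `d_G(α, β) ≤ 2 δ(G) + l_max`. -/
theorem dist_to_geodesic_of_three_sides (M : MetricGraph) (x y u v : M.X)
    (sxu suv svy sxy : Set M.X)
    (h1 : IsGeodesicArc x u sxu) (h2 : IsGeodesicArc u v suv)
    (h3 : IsGeodesicArc v y svy) (h4 : IsGeodesicArc x y sxy)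
    (hlu : ENNReal.ofReal (dist x u) ≤ M.lmax)
    (hlv : ENNReal.ofReal (dist v y) ≤ M.lmax) :
    ∀ α ∈ sxu ∪ suv ∪ svy, ∃ β ∈ sxy,
      edist α β ≤ 2 * hypConst M.X + M.lmax := by
  have hdd : hypConst M.X ≤ 2 * hypConst M.X := by
    rw [two_mul]; exact le_add_self
  intro α hα
  rcases hα with hα | hα
  · rcases hα with hα | hα
    · -- α ∈ [xu] : take β = x
      refine ⟨x, h4.mem_left, ?_⟩
      calc edist α x = ENNReal.ofReal (dist α x) := edist_dist _ _
        _ ≤ ENNReal.ofReal (dist x u) := by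
            refine ENNReal.ofReal_le_ofReal ?_
            rw [dist_comm]; exact h1.dist_left_le hα
        _ ≤ M.lmax := hlu
        _ ≤ 2 * hypConst M.X + M.lmax := le_add_self
    · -- α ∈ [uv]
      obtain ⟨svx, hvx⟩ := M.geodesic v x
      have T1 : IsGeodTriangle u v x suv svx sxu := ⟨h2, hvx, h1⟩
      obtain ⟨p, hp, hpd⟩ := (hvx.isCompact.union h1.isCompact).exists_infDist_eq_dist
        ⟨v, Or.inl hvx.mem_left⟩ α
      have hαp : edist α p ≤ hypConst M.X := by
        rw [edist_dist, ← hpd]; exact side1_le_hypConst T1 hα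
      rcases hp with hp | hp
      · -- p ∈ [vx] : second triangle x v y
        have T2 : IsGeodTriangle x v y svx svy sxy := ⟨hvx.symm, h3, h4.symm⟩
        obtain ⟨q, hq, hqd⟩ := (h3.isCompact.union h4.isCompact).exists_infDist_eq_dist
          ⟨v, Or.inl h3.mem_left⟩ p
        have hpq : edist p q ≤ hypConst M.X := by
          rw [edist_dist, ← hqd]; exact side1_le_hypConst T2 hp
        rcases hq with hq | hq
        · -- q ∈ [vy] : take β = y
          refine ⟨y, h4.symm.mem_left, ?_⟩
          have hqy : edist q y ≤ M.lmax := by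
            refine le_trans ?_ hlv
            rw [edist_dist]
            refine ENNReal.ofReal_le_ofReal ?_
            rw [dist_comm q y, dist_comm v y]
            exact h3.symm.dist_left_le hq
          calc edist α y ≤ edist α p + edist p y := edist_triangle _ _ _
            _ ≤ edist α p + (edist p q + edist q y) := by
                exact add_le_add_right (edist_triangle _ _ _) _
            _ ≤ hypConst M.X + (hypConst M.X + M.lmax) :=
                add_le_add hαp (add_le_add hpq hqy)
            _ = 2 * hypConst M.X + M.lmax := by rw [two_mul, add_assoc]
        · -- q ∈ [xy] : take β = q
          refine ⟨q, hq, ?_⟩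
          calc edist α q ≤ edist α p + edist p q := edist_triangle _ _ _
            _ ≤ hypConst M.X + hypConst M.X := add_le_add hαp hpq
            _ = 2 * hypConst M.X := (two_mul _).symm
            _ ≤ 2 * hypConst M.X + M.lmax := le_self_add
      · -- p ∈ [xu] : take β = x
        refine ⟨x, h4.mem_left, ?_⟩
        have hpx : edist p x ≤ M.lmax := by
          refine le_trans ?_ hlu
          rw [edist_dist]
          refine ENNReal.ofReal_le_ofReal ?_
          rw [dist_comm]
          exact h1.dist_left_le hp
        calc edist α x ≤ edist α p + edist p x := edist_triangle _ _ _
          _ ≤ hypConst M.X + M.lmax := add_le_add hαp hpx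
          _ ≤ 2 * hypConst M.X + M.lmax := add_le_add_left hdd _
  · -- α ∈ [vy] : take β = y
    refine ⟨y, h4.symm.mem_left, ?_⟩
    calc edist α y = ENNReal.ofReal (dist α y) := edist_dist _ _
      _ ≤ ENNReal.ofReal (dist v y) := by
          refine ENNReal.ofReal_le_ofReal ?_
          rw [dist_comm α y, dist_comm v y]; exact h3.symm.dist_left_le hα
      _ ≤ M.lmax := hlv
      _ ≤ 2 * hypConst M.X + M.lmax := le_add_self
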